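/- Let q, p ∈ ℂ with p² = q and 0 < |q| < 1, and let Q1, Q2, Q3 ∈ ℂ. The function Φ(x) := ∏_{i=1}^∞ [(1 − Q1 pq^{i−1}x)(1 − Q1Q2Q3 pq^{i−1}x)] / [(1 − pq^{i−1}x)(1 − Q1Q3 pq^{i−1}x)] is holomorphic in a neighborhood of 0 with Φ(0) = 1, and its Taylor coefficients b_k at 0 satisfy, for every k ≥ 0 (with the convention b_{−1} = b_{−2} = 0), the recursion q^k b_k − Q1(1+Q2Q3) p q^{k−1} b_{k−1} + Q1²Q2Q3 q^{k−1} b_{k−2} = b_k − (1+Q1Q3) p b_{k−1} + Q1Q3 q b_{k−2}. -/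

import Mathlib

/-- The factor of the infinite product `Φ(x)` indexed by (0-based) `i : ℕ`,
where `p` plays the role of `q^{1/2}`, so `p * q^i = q^{(i+1)−1/2}`. -/
noncomputable def PhiFactor (q p Q1 Q2 Q3 x : ℂ) (i : ℕ) : ℂ :=
  ((1 - Q1 * (p * q ^ i) * x) * (1 - Q1 * Q2 * Q3 * (p * q ^ i) * x)) /
    ((1 - (p * q ^ i) * x) * (1 - Q1 * Q3 * (p * q ^ i) * x))

/-- The Taylor coefficients of a power series extended by `0` to negative
integer indices (the convention `b_{−1} = b_{−2} = 0`). -/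
noncomputable def extendedCoeff (F : FormalMultilinearSeries ℂ ℂ ℂ) (m : ℤ) : ℂ :=
  if 0 ≤ m then F.coeff m.toNat else 0

open Complex Metric

/-- shift a sequence by `k`, filling with zeros. -/
def seqShift (k : ℕ) (s : ℕ → ℂ) (n : ℕ) : ℂ := if k ≤ n then s (n - k) else 0

lemma seqShift_add (k : ℕ) (s : ℕ → ℂ) (n : ℕ) : seqShift k s (n + k) = s n := by
  simp [seqShift]

lemma seqShift_of_lt {k n : ℕ} (h : n < k) (s : ℕ → ℂ) : seqShift k s n = 0 := by
  simp [seqShift, Nat.not_le.mpr h]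

lemma hasSum_seqShift {s : ℕ → ℂ} {z S : ℂ} (k : ℕ)
    (h : HasSum (fun n => s n * z ^ n) S) :
    HasSum (fun n => seqShift k s n * z ^ n) (z ^ k * S) := by
  have h2 : HasSum (fun n => seqShift k s (n + k) * z ^ (n + k)) (z ^ k * S) := by
    have h' := h.mul_left (z ^ k)
    have e : (fun n => seqShift k s (n + k) * z ^ (n + k)) = fun n => z ^ k * (s n * z ^ n) := by
      funext n; rw [seqShift_add]; ring
    rw [e]; exact h'
  have h3 := (hasSum_nat_add_iff (f := fun n => seqShift k s n * z ^ n) k).mp h2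
  have h4 : ∑ i ∈ Finset.range k, seqShift k s i * z ^ i = 0 := by
    apply Finset.sum_eq_zero
    intro i hi
    rw [seqShift_of_lt (Finset.mem_range.mp hi)]
    ring
  rwa [h4, add_zero] at h3

lemma hasSum_polyMul {s : ℕ → ℂ} {z S α β : ℂ}
    (h : HasSum (fun n => s n * z ^ n) S) :
    HasSum (fun n => (s n - α * seqShift 1 s n + β * seqShift 2 s n) * z ^ n)
      ((1 - α * z + β * z ^ 2) * S) := by
  have h1 := (hasSum_seqShift 1 h).mul_left α
  have h2 := (hasSum_seqShift 2 h).mul_left β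
  have h3 := (h.sub h1).add h2
  have e1 : (fun n => (s n - α * seqShift 1 s n + β * seqShift 2 s n) * z ^ n)
      = fun n => (s n * z ^ n - α * (seqShift 1 s n * z ^ n)) + β * (seqShift 2 s n * z ^ n) := by
    funext n; ring
  have e2 : (1 - α * z + β * z ^ 2) * S = (S - α * (z ^ 1 * S)) + β * (z ^ 2 * S) := by ring
  rw [e1, e2]; exact h3

lemma ofScalars_coeff (c : ℕ → ℂ) (n : ℕ) :
    (FormalMultilinearSeries.ofScalars ℂ c).coeff n = c n := by
  simp [FormalMultilinearSeries.coeff, FormalMultilinearSeries.ofScalars, List.prod_ofFn]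

/-- the log of one of the four elementary factors -/
noncomputable def phiLog (q p Q1 Q2 Q3 : ℂ) (i : ℕ) (x : ℂ) : ℂ :=
  Complex.log (1 - Q1 * (p * q ^ i) * x) + Complex.log (1 - Q1 * Q2 * Q3 * (p * q ^ i) * x)
    - Complex.log (1 - (p * q ^ i) * x) - Complex.log (1 - Q1 * Q3 * (p * q ^ i) * x)

set_option maxHeartbeats 2000000 in
/-- relation (bk-recursion) of the paper: for `p² = q` and
`0 < |q| < 1`, the function `Φ(x) = ∏_{i≥1} PhiFactor ...` is holomorphic near
`0` (it admits a power series expansion `F` at `0`) with `Φ(0) = 1` (i.e.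
`F.coeff 0 = 1`), and its Taylor coefficients `b_k = F.coeff k` satisfy, for every
`k ≥ 0` (with `b_{−1} = b_{−2} = 0`),
`q^k b_k − Q1(1+Q2Q3) p q^{k−1} b_{k−1} + Q1²Q2Q3 q^{k−1} b_{k−2}
   = b_k − (1+Q1Q3) p b_{k−1} + Q1Q3 q b_{k−2}`. -/
theorem closed_topological_vertex_Phi_coeff_recursion
    (q p Q1 Q2 Q3 : ℂ) (hp : p ^ 2 = q)
    (hq0 : 0 < ‖q‖) (hq1 : ‖q‖ < 1) :
    ∃ F : FormalMultilinearSeries ℂ ℂ ℂ,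
      HasFPowerSeriesAt (fun x : ℂ => ∏' i : ℕ, PhiFactor q p Q1 Q2 Q3 x i) F 0 ∧
      F.coeff 0 = 1 ∧
      ∀ k : ℕ,
        q ^ (k : ℤ) * extendedCoeff F k
            - Q1 * (1 + Q2 * Q3) * p * q ^ ((k : ℤ) - 1) * extendedCoeff F ((k : ℤ) - 1)
            + Q1 ^ 2 * Q2 * Q3 * q ^ ((k : ℤ) - 1) * extendedCoeff F ((k : ℤ) - 2) =
          extendedCoeff F k
            - (1 + Q1 * Q3) * p * extendedCoeff F ((k : ℤ) - 1)
            + Q1 * Q3 * q * extendedCoeff F ((k : ℤ) - 2) := by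
  set Φ : ℂ → ℂ := fun x : ℂ => ∏' i : ℕ, PhiFactor q p Q1 Q2 Q3 x i with hΦ
  have hqn : ‖q‖ < 1 := hq1
  set c : ℝ := (‖Q1‖ + 1) * (‖Q2‖ + 1) * (‖Q3‖ + 1) * (‖p‖ + 1) with hcdef
  have hc1 : 1 ≤ c := by
    rw [hcdef]
    have h1 := norm_nonneg Q1; have h2 := norm_nonneg Q2
    have h3 := norm_nonneg Q3; have h4 := norm_nonneg p
    have k1 : (1:ℝ) ≤ (‖Q1‖+1)*(‖Q2‖+1) := by nlinarith
    have k2 : (1:ℝ) ≤ (‖Q3‖+1)*(‖p‖+1) := by nlinarith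
    calc (1:ℝ) ≤ (‖Q1‖+1)*(‖Q2‖+1) := k1
      _ ≤ ((‖Q1‖+1)*(‖Q2‖+1)) * ((‖Q3‖+1)*(‖p‖+1)) := le_mul_of_one_le_right (by positivity) k2
      _ = (‖Q1‖ + 1) * (‖Q2‖ + 1) * (‖Q3‖ + 1) * (‖p‖ + 1) := by ring
  have hc0 : (0:ℝ) < c := lt_of_lt_of_le one_pos hc1
  set r : ℝ := 1 / (2 * c) with hrdef
  have hr : 0 < r := by positivity
  set U : Set ℂ := Metric.ball (0:ℂ) r with hUdef
  have hU0 : U ∈ nhds (0:ℂ) := Metric.ball_mem_nhds _ hr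
  have hUopen : IsOpen U := Metric.isOpen_ball
  -- the four coefficient constants
  have ha1 : ‖Q1 * p‖ ≤ c := by
    rw [hcdef, norm_mul]
    have h1 := norm_nonneg Q1; have h2 := norm_nonneg Q2
    have h3 := norm_nonneg Q3; have h4 := norm_nonneg p
    have k1 : ‖Q1‖ * ‖p‖ ≤ (‖Q1‖+1)*(‖p‖+1) := by nlinarith
    have k2 : (1:ℝ) ≤ (‖Q2‖+1)*(‖Q3‖+1) := by nlinarith
    calc ‖Q1‖ * ‖p‖ ≤ (‖Q1‖+1)*(‖p‖+1) := k1
      _ ≤ ((‖Q1‖+1)*(‖p‖+1)) * ((‖Q2‖+1)*(‖Q3‖+1)) := le_mul_of_one_le_right (by positivity) k2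
      _ = (‖Q1‖ + 1) * (‖Q2‖ + 1) * (‖Q3‖ + 1) * (‖p‖ + 1) := by ring
  have ha2 : ‖Q1 * Q2 * Q3 * p‖ ≤ c := by
    rw [hcdef, norm_mul, norm_mul, norm_mul]
    have h1 := norm_nonneg Q1; have h2 := norm_nonneg Q2
    have h3 := norm_nonneg Q3; have h4 := norm_nonneg p
    have k1 : ‖Q1‖ * ‖Q2‖ ≤ (‖Q1‖+1)*(‖Q2‖+1) := by nlinarith
    have k2 : ‖Q3‖ * ‖p‖ ≤ (‖Q3‖+1)*(‖p‖+1) := by nlinarith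
    calc ‖Q1‖ * ‖Q2‖ * ‖Q3‖ * ‖p‖ = (‖Q1‖ * ‖Q2‖) * (‖Q3‖ * ‖p‖) := by ring
      _ ≤ ((‖Q1‖+1)*(‖Q2‖+1)) * ((‖Q3‖+1)*(‖p‖+1)) :=
          mul_le_mul k1 k2 (by positivity) (by positivity)
      _ = (‖Q1‖ + 1) * (‖Q2‖ + 1) * (‖Q3‖ + 1) * (‖p‖ + 1) := by ring
  have ha3 : ‖(1:ℂ) * p‖ ≤ c := by
    rw [hcdef, norm_mul, norm_one, one_mul]
    have h1 := norm_nonneg Q1; have h2 := norm_nonneg Q2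
    have h3 := norm_nonneg Q3; have h4 := norm_nonneg p
    have k1 : ‖p‖ ≤ (‖Q1‖+1)*(‖p‖+1) := by nlinarith
    have k2 : (1:ℝ) ≤ (‖Q2‖+1)*(‖Q3‖+1) := by nlinarith
    calc ‖p‖ ≤ (‖Q1‖+1)*(‖p‖+1) := k1
      _ ≤ ((‖Q1‖+1)*(‖p‖+1)) * ((‖Q2‖+1)*(‖Q3‖+1)) := le_mul_of_one_le_right (by positivity) k2
      _ = (‖Q1‖ + 1) * (‖Q2‖ + 1) * (‖Q3‖ + 1) * (‖p‖ + 1) := by ring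
  have ha4 : ‖Q1 * Q3 * p‖ ≤ c := by
    rw [hcdef, norm_mul, norm_mul]
    have h1 := norm_nonneg Q1; have h2 := norm_nonneg Q2
    have h3 := norm_nonneg Q3; have h4 := norm_nonneg p
    have k1 : ‖Q1‖ * ‖Q3‖ ≤ (‖Q1‖+1)*(‖Q3‖+1) := by nlinarith
    have k2 : ‖p‖ ≤ (‖Q2‖+1)*(‖p‖+1) := by nlinarith
    calc ‖Q1‖ * ‖Q3‖ * ‖p‖ = (‖Q1‖ * ‖Q3‖) * ‖p‖ := by ring
      _ ≤ ((‖Q1‖+1)*(‖Q3‖+1)) * ((‖Q2‖+1)*(‖p‖+1)) :=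
          mul_le_mul k1 k2 (by positivity) (by positivity)
      _ = (‖Q1‖ + 1) * (‖Q2‖ + 1) * (‖Q3‖ + 1) * (‖p‖ + 1) := by ring
  -- basic estimate for a single term
  have hkey : ∀ a : ℂ, ‖a * p‖ ≤ c → ∀ i : ℕ, ∀ x ∈ U, ‖a * (p * q ^ i) * x‖ ≤ 1/2 * ‖q‖ ^ i := by
    intro a ha i x hx
    have hx' : ‖x‖ ≤ r := by
      have := Metric.mem_ball.mp hx
      rw [dist_zero_right] at this
      exact this.le
    have e : a * (p * q ^ i) * x = (a * p) * q ^ i * x := by ring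
    rw [e, norm_mul, norm_mul, norm_pow]
    have hqi : (0:ℝ) ≤ ‖q‖ ^ i := by positivity
    have h1 : ‖a * p‖ * ‖q‖ ^ i * ‖x‖ ≤ c * ‖q‖ ^ i * r := by
      have := mul_le_mul (mul_le_mul ha le_rfl hqi hc0.le) hx' (norm_nonneg x)
        (by positivity)
      exact this
    have h2 : c * ‖q‖ ^ i * r = 1/2 * ‖q‖ ^ i := by
      rw [hrdef]; field_simp
    linarith
  have hqpow1 : ∀ i : ℕ, ‖q‖ ^ i ≤ 1 := fun i => pow_le_one₀ (norm_nonneg q) hqn.le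
  -- properties of the elementary factors
  have H : ∀ a : ℂ, ‖a * p‖ ≤ c → ∀ i : ℕ, ∀ x ∈ U,
      (1 - a * (p * q ^ i) * x ≠ 0) ∧ (1 - a * (p * q ^ i) * x ∈ Complex.slitPlane) ∧
      ‖Complex.log (1 - a * (p * q ^ i) * x)‖ ≤ 3/2 * (1/2 * ‖q‖ ^ i) := by
    intro a ha i x hx
    set t : ℂ := a * (p * q ^ i) * x with htdef
    have ht : ‖t‖ ≤ 1/2 * ‖q‖ ^ i := hkey a ha i x hx
    have ht2 : ‖t‖ ≤ 1/2 := le_trans ht (by nlinarith [hqpow1 i, norm_nonneg q])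
    have hne : (1:ℂ) - t ≠ 0 := by
      intro h
      have : t = 1 := by linear_combination -h
      rw [this] at ht2; norm_num at ht2
    have hre : (0:ℝ) < (1 - t).re := by
      have : t.re ≤ ‖t‖ := Complex.re_le_norm t
      simp only [Complex.sub_re, Complex.one_re]
      linarith
    refine ⟨hne, Or.inl hre, ?_⟩
    have : (1:ℂ) - t = 1 + (-t) := by ring
    rw [this]
    have := Complex.norm_log_one_add_half_le_self (z := -t) (by rwa [norm_neg])
    calc ‖Complex.log (1 + -t)‖ ≤ 3/2 * ‖-t‖ := this
      _ ≤ 3/2 * (1/2 * ‖q‖ ^ i) := by rw [norm_neg]; linarith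
  -- bound on phiLog
  have hlogbound : ∀ i : ℕ, ∀ x ∈ U, ‖phiLog q p Q1 Q2 Q3 i x‖ ≤ 3 * ‖q‖ ^ i := by
    intro i x hx
    have h1 := (H Q1 ha1 i x hx).2.2
    have h2 := (H (Q1 * Q2 * Q3) ha2 i x hx).2.2
    have h3 := (H 1 ha3 i x hx).2.2
    have h4 := (H (Q1 * Q3) ha4 i x hx).2.2
    rw [one_mul] at h3
    unfold phiLog
    calc ‖Complex.log (1 - Q1 * (p * q ^ i) * x) + Complex.log (1 - Q1 * Q2 * Q3 * (p * q ^ i) * x)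
          - Complex.log (1 - (p * q ^ i) * x) - Complex.log (1 - Q1 * Q3 * (p * q ^ i) * x)‖
        ≤ ‖Complex.log (1 - Q1 * (p * q ^ i) * x) + Complex.log (1 - Q1 * Q2 * Q3 * (p * q ^ i) * x)
          - Complex.log (1 - (p * q ^ i) * x)‖ + ‖Complex.log (1 - Q1 * Q3 * (p * q ^ i) * x)‖ :=
          norm_sub_le _ _
      _ ≤ ‖Complex.log (1 - Q1 * (p * q ^ i) * x) + Complex.log (1 - Q1 * Q2 * Q3 * (p * q ^ i) * x)‖
          + ‖Complex.log (1 - (p * q ^ i) * x)‖ + ‖Complex.log (1 - Q1 * Q3 * (p * q ^ i) * x)‖ := by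
          have := norm_sub_le (Complex.log (1 - Q1 * (p * q ^ i) * x)
            + Complex.log (1 - Q1 * Q2 * Q3 * (p * q ^ i) * x)) (Complex.log (1 - (p * q ^ i) * x))
          linarith
      _ ≤ ‖Complex.log (1 - Q1 * (p * q ^ i) * x)‖ + ‖Complex.log (1 - Q1 * Q2 * Q3 * (p * q ^ i) * x)‖
          + ‖Complex.log (1 - (p * q ^ i) * x)‖ + ‖Complex.log (1 - Q1 * Q3 * (p * q ^ i) * x)‖ := by
          have := norm_add_le (Complex.log (1 - Q1 * (p * q ^ i) * x))
            (Complex.log (1 - Q1 * Q2 * Q3 * (p * q ^ i) * x))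
          linarith
      _ ≤ 3 * ‖q‖ ^ i := by linarith
  have hsummable : Summable (fun i : ℕ => 3 * ‖q‖ ^ i) :=
    (summable_geometric_of_lt_one (norm_nonneg q) hqn).mul_left 3
  -- S is the sum of the logs
  set S : ℂ → ℂ := fun x => ∑' i : ℕ, phiLog q p Q1 Q2 Q3 i x with hSdef
  have hdiff : ∀ i : ℕ, DifferentiableOn ℂ (fun x => phiLog q p Q1 Q2 Q3 i x) U := by
    intro i
    intro x hx
    apply DifferentiableAt.differentiableWithinAt
    have hd : ∀ a : ℂ, ‖a * p‖ ≤ c →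
        DifferentiableAt ℂ (fun y => Complex.log (1 - a * (p * q ^ i) * y)) x := by
      intro a ha
      apply DifferentiableAt.clog
      · exact (differentiableAt_const _).sub (differentiableAt_id.const_mul _)
      · exact (H a ha i x hx).2.1
    have h3 := hd 1 ha3
    simp only [one_mul] at h3
    exact (((hd Q1 ha1).add (hd (Q1*Q2*Q3) ha2)).sub h3).sub (hd (Q1*Q3) ha4)
  have hSdiff : DifferentiableOn ℂ S U := by
    rw [hSdef]
    exact differentiableOn_tsum_of_summable_norm hsummable hdiff hUopen hlogbound
  -- pointwise HasProd
  have hsumlog : ∀ x ∈ U, HasSum (fun i => phiLog q p Q1 Q2 Q3 i x) (S x) := by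
    intro x hx
    apply Summable.hasSum
    exact Summable.of_norm_bounded hsummable (fun i => hlogbound i x hx)
  have hexp : ∀ x ∈ U, ∀ i : ℕ,
      Complex.exp (phiLog q p Q1 Q2 Q3 i x) = PhiFactor q p Q1 Q2 Q3 x i := by
    intro x hx i
    unfold phiLog PhiFactor
    rw [Complex.exp_sub, Complex.exp_sub, Complex.exp_add]
    rw [Complex.exp_log (H Q1 ha1 i x hx).1, Complex.exp_log (H (Q1*Q2*Q3) ha2 i x hx).1,
      Complex.exp_log (by simpa using (H 1 ha3 i x hx).1),
      Complex.exp_log (H (Q1*Q3) ha4 i x hx).1]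
    field_simp
  have hprod : ∀ x ∈ U, HasProd (fun i => PhiFactor q p Q1 Q2 Q3 x i) (Complex.exp (S x)) := by
    intro x hx
    have h := (hsumlog x hx).cexp
    have e : (Complex.exp ∘ fun i => phiLog q p Q1 Q2 Q3 i x)
        = fun i => PhiFactor q p Q1 Q2 Q3 x i := funext fun i => hexp x hx i
    rwa [e] at h
  have hPhiU : ∀ x ∈ U, Φ x = Complex.exp (S x) := fun x hx => (hprod x hx).tprod_eq
  -- analyticity
  have hAn : AnalyticAt ℂ Φ 0 := by
    have hd : DifferentiableOn ℂ (fun x => Complex.exp (S x)) U :=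
      fun x hx => ((hSdiff x hx).cexp)
    have h1 : AnalyticAt ℂ (fun x => Complex.exp (S x)) 0 := hd.analyticAt hU0
    apply h1.congr
    filter_upwards [hU0] with x hx
    exact (hPhiU x hx).symm
  obtain ⟨F, hF⟩ := hAn
  refine ⟨F, hF, ?_, ?_⟩
  · -- F.coeff 0 = 1
    have h0 : F.coeff 0 = Φ 0 := hF.coeff_zero fun _ => 1
    rw [h0, hΦ]
    have : ∀ i : ℕ, PhiFactor q p Q1 Q2 Q3 0 i = 1 := by
      intro i; unfold PhiFactor; simp
    simp only [this]
    exact tprod_one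
  · -- the recursion
    set α : ℂ := (1 + Q1 * Q3) * p with hα
    set β : ℂ := Q1 * Q3 * q with hβ
    set α' : ℂ := Q1 * (1 + Q2 * Q3) * p with hα'
    set β' : ℂ := Q1 ^ 2 * Q2 * Q3 * q with hβ'
    set b : ℕ → ℂ := fun n => F.coeff n with hb
    set b' : ℕ → ℂ := fun n => q ^ n * b n with hb'
    set cs : ℕ → ℂ := fun n => b n - α * seqShift 1 b n + β * seqShift 2 b n with hcs
    set es : ℕ → ℂ := fun n => b' n - α' * seqShift 1 b' n + β' * seqShift 2 b' n with hes
    -- functional equation on U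
    have hfun : ∀ x ∈ U, (1 - α * x + β * x ^ 2) * Φ x = (1 - α' * x + β' * x ^ 2) * Φ (q * x) := by
      intro x hx
      have hqxU : q * x ∈ U := by
        rw [hUdef, Metric.mem_ball, dist_zero_right] at hx ⊢
        calc ‖q * x‖ = ‖q‖ * ‖x‖ := norm_mul q x
          _ ≤ 1 * ‖x‖ := by
              have := norm_nonneg x
              nlinarith
          _ < r := by rwa [one_mul]
      have hshift : (fun i : ℕ => PhiFactor q p Q1 Q2 Q3 x (i+1))
          = fun i : ℕ => PhiFactor q p Q1 Q2 Q3 (q * x) i := by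
        funext i
        unfold PhiFactor
        congr 1
        · congr 1 <;> congr 1 <;> ring
        · congr 1 <;> congr 1 <;> ring
      have hmult2 : Multipliable (fun i : ℕ => PhiFactor q p Q1 Q2 Q3 x (i+1)) := by
        rw [hshift]
        exact (hprod (q * x) hqxU).multipliable
      have hsplit : Φ x = PhiFactor q p Q1 Q2 Q3 x 0 * ∏' i : ℕ, PhiFactor q p Q1 Q2 Q3 x (i+1) :=
        tprod_eq_zero_mul' hmult2
      rw [show (∏' i : ℕ, PhiFactor q p Q1 Q2 Q3 x (i+1)) = Φ (q * x) by rw [hshift]] at hsplit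
      have hP1 : (1:ℂ) - p * x ≠ 0 := by
        have := (H 1 ha3 0 x hx).1; simpa using this
      have hP2 : (1:ℂ) - Q1 * Q3 * p * x ≠ 0 := by
        have := (H (Q1*Q3) ha4 0 x hx).1; simpa [mul_assoc] using this
      have hfac : PhiFactor q p Q1 Q2 Q3 x 0
          = ((1 - Q1 * p * x) * (1 - Q1 * Q2 * Q3 * p * x))
            / ((1 - p * x) * (1 - Q1 * Q3 * p * x)) := by
        unfold PhiFactor; norm_num
      rw [hsplit, hfac]
      have e1 : (1:ℂ) - α * x + β * x ^ 2 = (1 - p * x) * (1 - Q1 * Q3 * p * x) := by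
        rw [hα, hβ, ← hp]; ring
      have e2 : (1:ℂ) - α' * x + β' * x ^ 2 = (1 - Q1 * p * x) * (1 - Q1 * Q2 * Q3 * p * x) := by
        rw [hα', hβ', ← hp]; ring
      rw [e1, e2]
      field_simp
      have hP2' : (1:ℂ) - p * x * Q1 * Q3 ≠ 0 := by
        rw [show p * x * Q1 * Q3 = Q1 * Q3 * p * x by ring]; exact hP2
      rw [div_eq_iff hP2']; ring
    -- power series of both sides
    have hbsum : ∀ᶠ z in nhds (0:ℂ), HasSum (fun n => b n * z ^ n) (Φ z) := by
      have := hasFPowerSeriesAt_iff.mp hF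
      filter_upwards [this] with z hz
      simp only [zero_add, smul_eq_mul] at hz
      have e : (fun n => b n * z ^ n) = fun n => z ^ n * F.coeff n := by
        funext n; rw [hb]; ring
      rw [e]; exact hz
    have hqz : Filter.Tendsto (fun z : ℂ => q * z) (nhds 0) (nhds 0) := by
      simpa using (continuous_mul_left q).tendsto (0:ℂ)
    have hC : HasFPowerSeriesAt (fun z => (1 - α * z + β * z ^ 2) * Φ z)
        (FormalMultilinearSeries.ofScalars ℂ cs) 0 := by
      rw [hasFPowerSeriesAt_iff]
      filter_upwards [hbsum] with z hz
      simp only [zero_add, smul_eq_mul, ofScalars_coeff]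
      have := hasSum_polyMul (α := α) (β := β) hz
      have e : (fun n => z ^ n * cs n)
          = fun n => (b n - α * seqShift 1 b n + β * seqShift 2 b n) * z ^ n := by
        funext n; rw [hcs]; ring
      rw [e]; exact this
    have hE : HasFPowerSeriesAt (fun z => (1 - α' * z + β' * z ^ 2) * Φ (q * z))
        (FormalMultilinearSeries.ofScalars ℂ es) 0 := by
      rw [hasFPowerSeriesAt_iff]
      filter_upwards [hqz.eventually hbsum] with z hz
      have hz' : HasSum (fun n => b' n * z ^ n) (Φ (q * z)) := by
        have e : (fun n => b' n * z ^ n) = fun n => b n * (q * z) ^ n := by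
          funext n; rw [hb']; rw [mul_pow]; ring
        rw [e]; exact hz
      simp only [zero_add, smul_eq_mul, ofScalars_coeff]
      have := hasSum_polyMul (α := α') (β := β') hz'
      have e : (fun n => z ^ n * es n)
          = fun n => (b' n - α' * seqShift 1 b' n + β' * seqShift 2 b' n) * z ^ n := by
        funext n; rw [hes]; ring
      rw [e]; exact this
    have hEqF : (fun z => (1 - α * z + β * z ^ 2) * Φ z)
        =ᶠ[nhds (0:ℂ)] (fun z => (1 - α' * z + β' * z ^ 2) * Φ (q * z)) := by
      filter_upwards [hU0] with x hx
      exact hfun x hx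
    have hseries : FormalMultilinearSeries.ofScalars ℂ cs
        = FormalMultilinearSeries.ofScalars ℂ es :=
      hC.eq_formalMultilinearSeries_of_eventually hE hEqF
    have hce : ∀ n : ℕ, cs n = es n := by
      intro n
      have := congrArg (fun G : FormalMultilinearSeries ℂ ℂ ℂ => G.coeff n) hseries
      simpa only [ofScalars_coeff] using this
    -- conclude
    have hce' : ∀ n : ℕ,
        F.coeff n - (1 + Q1 * Q3) * p * seqShift 1 (fun m => F.coeff m) n
            + Q1 * Q3 * q * seqShift 2 (fun m => F.coeff m) n
          = q ^ n * F.coeff n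
            - Q1 * (1 + Q2 * Q3) * p * seqShift 1 (fun m => q ^ m * F.coeff m) n
            + Q1 ^ 2 * Q2 * Q3 * q * seqShift 2 (fun m => q ^ m * F.coeff m) n := by
      intro n
      have h := hce n
      rw [hcs, hes] at h
      simp only [hb, hb', hα, hβ, hα', hβ'] at h
      exact h
    have ecgen : ∀ m : ℕ, extendedCoeff F (m:ℤ) = F.coeff m := by
      intro m
      unfold extendedCoeff
      rw [if_pos (Int.natCast_nonneg m), Int.toNat_natCast]
    intro k
    match k with
    | 0 =>
      simp only [Nat.cast_zero, extendedCoeff]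
      norm_num
    | 1 =>
      have h := hce' 1
      have e1 : seqShift 1 (fun m => F.coeff m) 1 = F.coeff 0 := seqShift_add 1 _ 0
      have e1' : seqShift 1 (fun m => q ^ m * F.coeff m) 1 = q ^ 0 * F.coeff 0 :=
        seqShift_add 1 _ 0
      have e2 : seqShift 2 (fun m => F.coeff m) 1 = 0 := seqShift_of_lt one_lt_two _
      have e2' : seqShift 2 (fun m => q ^ m * F.coeff m) 1 = 0 := seqShift_of_lt one_lt_two _
      rw [e1, e1', e2, e2'] at h
      have g1 : ((1:ℕ):ℤ) - 1 = ((0:ℕ):ℤ) := by norm_num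
      have g2 : ((1:ℕ):ℤ) - 2 = (-1:ℤ) := by norm_num
      rw [g1, g2]
      have ec0 : extendedCoeff F ((0:ℕ):ℤ) = F.coeff 0 := ecgen 0
      have ec1 : extendedCoeff F ((1:ℕ):ℤ) = F.coeff 1 := ecgen 1
      have ecm : extendedCoeff F (-1:ℤ) = 0 := by simp [extendedCoeff]
      rw [ec0, ec1, ecm]
      rw [hα, hβ]
      simp only [zpow_natCast, zpow_one, Nat.cast_one]
      linear_combination -h
    | (n+2) =>
      have h := hce' (n+2)
      have e1 : seqShift 1 (fun m => F.coeff m) (n+2) = F.coeff (n+1) := seqShift_add 1 _ (n+1)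
      have e1' : seqShift 1 (fun m => q ^ m * F.coeff m) (n+2) = q ^ (n+1) * F.coeff (n+1) :=
        seqShift_add 1 _ (n+1)
      have e2 : seqShift 2 (fun m => F.coeff m) (n+2) = F.coeff n := seqShift_add 2 _ n
      have e2' : seqShift 2 (fun m => q ^ m * F.coeff m) (n+2) = q ^ n * F.coeff n :=
        seqShift_add 2 _ n
      rw [e1, e1', e2, e2'] at h
      have g1 : ((n+2:ℕ):ℤ) - 1 = ((n+1:ℕ):ℤ) := by push_cast; ring
      have g2 : ((n+2:ℕ):ℤ) - 2 = ((n:ℕ):ℤ) := by push_cast; ring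
      rw [g1, g2]
      have ec0 : extendedCoeff F ((n:ℕ):ℤ) = F.coeff n := ecgen n
      have ec1 : extendedCoeff F ((n+1:ℕ):ℤ) = F.coeff (n+1) := ecgen (n+1)
      have ec2 : extendedCoeff F ((n+2:ℕ):ℤ) = F.coeff (n+2) := ecgen (n+2)
      rw [ec0, ec1, ec2]
      rw [hα, hβ]
      simp only [zpow_natCast]
      linear_combination -h
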